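/- Let (X, X°, ξ) = (X₁, X°₁, ξ₁) * (X₂, X°₂, ξ₂) be the algebraic free product of two vector spaces with specified state-vector, let p be the associated rank-one idempotent on X and φ_p the expectation on L(X). For T₁ ∈ L(X₁), T₂ ∈ L(X₂), one has φ_p(λ₁(T₁)ρ₂(T₂)) = φ_{p₁}(T₁)·φ_{p₂}(T₂), i.e. the left operator from the first factor and the right operator from the second factor have factorizing expectation. -/
import Mathlib


/-- **Proposition 2.16 a), key computation** (Voiculescu, Free Probability for Pairs of
Faces I).  Let `(X, X°, ξ) = (X₁, X°₁, ξ₁) * (X₂, X°₂, ξ₂)` be the algebraic free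
product of two vector spaces with specified state-vector.  Then for `T₁ ∈ L(X₁)`,
`T₂ ∈ L(X₂)` the expectation factorizes:
`φ_p(λ₁(T₁) ρ₂(T₂)) = φ_{p₁}(T₁) · φ_{p₂}(T₂)`.

Here a state-vector space is encoded via its state functional `ψ` (`ψ ξ = 1`,
`ker ψ = X°`), so `φ_p(T) = ψ(T ξ)` and `φ_{pᵢ}(Tᵢ) = ψᵢ(Tᵢ ξᵢ)`.  The free-product
structure is encoded by the canonical embeddings `ι₁, ι₂` of `X₁ = ℂξ₁ ⊕ X°₁` and
`X₂ = ℂξ₂ ⊕ X°₂` into `X`, the bilinear map `Φ` giving the tensor words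
`X°₁ ⊗ X°₂ ⊆ X°`, and the action formulas of §1.9 for `λ₁` and `ρ₂`. -/
theorem expectation_factorizes_leftOp_rightOp
    {X₁ X₂ X : Type*}
    [AddCommGroup X₁] [Module ℂ X₁] [AddCommGroup X₂] [Module ℂ X₂]
    [AddCommGroup X] [Module ℂ X]
    (ξ₁ : X₁) (ξ₂ : X₂) (ξ : X)
    (ψ₁ : X₁ →ₗ[ℂ] ℂ) (ψ₂ : X₂ →ₗ[ℂ] ℂ) (ψ : X →ₗ[ℂ] ℂ)
    (hψ₁ : ψ₁ ξ₁ = 1) (hψ₂ : ψ₂ ξ₂ = 1) (hψ : ψ ξ = 1)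
    (ι₁ : X₁ →ₗ[ℂ] X) (ι₂ : X₂ →ₗ[ℂ] X)
    (hι₁ξ : ι₁ ξ₁ = ξ) (hι₂ξ : ι₂ ξ₂ = ξ)
    (hψι₁ : ψ.comp ι₁ = ψ₁) (hψι₂ : ψ.comp ι₂ = ψ₂)
    (Φ : X₁ →ₗ[ℂ] X₂ →ₗ[ℂ] X)
    (hΦ : ∀ u v, ψ₁ u = 0 → ψ₂ v = 0 → ψ (Φ u v) = 0)
    (lam₁ : (X₁ →ₗ[ℂ] X₁) → (X →ₗ[ℂ] X)) (rho₂ : (X₂ →ₗ[ℂ] X₂) → (X →ₗ[ℂ] X))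
    (hlamξ : ∀ T : X₁ →ₗ[ℂ] X₁, lam₁ T ξ = ι₁ (T ξ₁))
    (hrhoξ : ∀ T : X₂ →ₗ[ℂ] X₂, rho₂ T ξ = ι₂ (T ξ₂))
    (hlamact : ∀ (T : X₁ →ₗ[ℂ] X₁) (v : X₂), ψ₂ v = 0 →
      lam₁ T (ι₂ v) = ψ₁ (T ξ₁) • ι₂ v + Φ (T ξ₁ - ψ₁ (T ξ₁) • ξ₁) v)
    (T₁ : X₁ →ₗ[ℂ] X₁) (T₂ : X₂ →ₗ[ℂ] X₂) :
    ψ ((lam₁ T₁ ∘ₗ rho₂ T₂) ξ) = ψ₁ (T₁ ξ₁) * ψ₂ (T₂ ξ₂) := by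
  set c := ψ₂ (T₂ ξ₂) with hc
  set v := T₂ ξ₂ - c • ξ₂ with hv
  have hψv : ψ₂ v = 0 := by simp [hv, hc, hψ₂]
  have hT₂ : T₂ ξ₂ = c • ξ₂ + v := by simp [hv]
  have h1 : (lam₁ T₁ ∘ₗ rho₂ T₂) ξ
      = c • ι₁ (T₁ ξ₁) + (ψ₁ (T₁ ξ₁) • ι₂ v + Φ (T₁ ξ₁ - ψ₁ (T₁ ξ₁) • ξ₁) v) := by
    rw [LinearMap.comp_apply, hrhoξ, hT₂, map_add, map_smul, hι₂ξ, map_add, map_smul,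
      hlamξ, hlamact T₁ v hψv]
  have hψι₁' : ∀ x, ψ (ι₁ x) = ψ₁ x := fun x => congrFun (congrArg DFunLike.coe hψι₁) x
  have hψι₂' : ∀ x, ψ (ι₂ x) = ψ₂ x := fun x => congrFun (congrArg DFunLike.coe hψι₂) x
  have hΦ0 : ψ (Φ (T₁ ξ₁ - ψ₁ (T₁ ξ₁) • ξ₁) v) = 0 := by
    apply hΦ _ _ _ hψv
    simp [hψ₁]
  rw [h1, map_add, map_add, map_smul, map_smul, hψι₁', hψι₂', hψv, hΦ0]
  simp [smul_eq_mul, mul_comm]
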